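/- Let (X,d) be a complete metric space, let f : X → (−∞,∞] be lower semicontinuous, and let x̄ be a point with f(x̄) finite at which the slope is zero: |∇f|(x̄) = 0. Let M be an identifiable set for f at x̄. Then x̄ is a local minimizer of f if and only if x̄ is a local minimizer of f restricted to M (that is, f(x) ≥ f(x̄) for all x ∈ M near x̄). -/

import Mathlib

open Filter Topology
open scoped ENNReal NNReal

/-- The slope `|∇f|(x)`: the infimum of all `δ > 0` such that `x` is a local minimizer of
`f + δ·d(·,x)`; it equals `∞` at points where `f x = ⊤`. -/
noncomputable def slopeM {X : Type*} [MetricSpace X] (f : X → EReal) (x : X) : ℝ≥0∞ :=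
  if f x = ⊤ then ⊤
  else sInf {δ : ℝ≥0∞ | ∃ c : ℝ, 0 < c ∧ δ = ENNReal.ofReal c ∧
    ∀ᶠ z in 𝓝 x, f x ≤ f z + ((c * dist z x : ℝ) : EReal)}

/-- The modulus of identifiability: `liminf_{x → xbar, x ∉ M, f(x) → f(xbar)} |∇f|(x)`. -/
noncomputable def identModulus {X : Type*} [MetricSpace X] (f : X → EReal) (M : Set X)
    (xbar : X) : ℝ≥0∞ :=
  Filter.liminf (slopeM f) (𝓝[Mᶜ] xbar ⊓ Filter.comap f (𝓝 (f xbar)))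

/-- `M` is an identifiable set for `f` at `xbar`: it is closed, contains `xbar`, and the
modulus of identifiability is strictly positive. -/
def Identifiable {X : Type*} [MetricSpace X] (f : X → EReal) (M : Set X) (xbar : X) : Prop :=
  IsClosed M ∧ xbar ∈ M ∧ 0 < identModulus f M xbar

lemma ereal_real {a : EReal} (h1 : a ≠ ⊤) (h2 : a ≠ ⊥) : ∃ r : ℝ, a = (r : EReal) :=
  ⟨a.toReal, (EReal.coe_toReal h1 h2).symm⟩

lemma ereal_le_add_nonneg (x : EReal) (c : ℝ) (hc : 0 ≤ c) : x ≤ x + (c : EReal) := by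
  calc x = x + ((0:ℝ) : EReal) := by simp
  _ ≤ x + (c : EReal) := add_le_add_right (by exact_mod_cast hc) x

/-- Ekeland's variational principle for lower semicontinuous `EReal`-valued functions
bounded below on a complete metric space. -/
lemma ekelandEReal {X : Type*} [MetricSpace X] [CompleteSpace X] (g : X → EReal)
    (hlsc : LowerSemicontinuous g) (b : ℝ) (hb : ∀ z, (b : EReal) ≤ g z)
    (lam : ℝ) (hlam : 0 < lam) (x0 : X) (hx0 : g x0 ≠ ⊤) :
    ∃ v, g v + ((lam * dist v x0 : ℝ) : EReal) ≤ g x0 ∧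
      ∀ w, g v ≤ g w + ((lam * dist w v : ℝ) : EReal) := by
  classical
  set S : X → Set X := fun v => {w | g w + ((lam * dist w v : ℝ) : EReal) ≤ g v} with hS
  have hSrefl : ∀ v, v ∈ S v := by
    intro v
    simp [hS, dist_self]
  have hle : ∀ v w, w ∈ S v → g w ≤ g v := by
    intro v w hw
    calc g w = g w + ((0:ℝ) : EReal) := by simp
    _ ≤ g w + ((lam * dist w v : ℝ) : EReal) := by
        apply add_le_add_right
        exact_mod_cast mul_nonneg hlam.le dist_nonneg
    _ ≤ g v := hw
  have htrans : ∀ v v' w, w ∈ S v' → v' ∈ S v → w ∈ S v := by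
    intro v v' w hw hv'
    have h1 : ((lam * dist w v : ℝ) : EReal) ≤ ((lam * dist w v' : ℝ) : EReal) +
        ((lam * dist v' v : ℝ) : EReal) := by
      rw [← EReal.coe_add]
      apply EReal.coe_le_coe_iff.2
      nlinarith [dist_triangle w v' v]
    calc g w + ((lam * dist w v : ℝ) : EReal)
        ≤ g w + (((lam * dist w v' : ℝ) : EReal) + ((lam * dist v' v : ℝ) : EReal)) :=
          add_le_add_right h1 _
      _ = (g w + ((lam * dist w v' : ℝ) : EReal)) + ((lam * dist v' v : ℝ) : EReal) :=
          (add_assoc _ _ _).symm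
      _ ≤ g v' + ((lam * dist v' v : ℝ) : EReal) := add_le_add_left hw _
      _ ≤ g v := hv'
  -- existence of good next point
  have hex : ∀ (n : ℕ) (w : X), ∃ u, g w ≤ g x0 → u ∈ S w ∧
      ∀ z ∈ S w, g u < g z + (((1/2:ℝ)^n : ℝ) : EReal) := by
    intro n w
    by_cases hw : g w ≤ g x0
    · have hSne : (g '' S w).Nonempty := ⟨g w, w, hSrefl w, rfl⟩
      set i := sInf (g '' S w) with hi
      have hitop : i ≠ ⊤ := by
        intro h
        have : i ≤ g w := sInf_le ⟨w, hSrefl w, rfl⟩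
        rw [h] at this
        exact hx0 (top_le_iff.1 (this.trans hw))
      have hibot : i ≠ ⊥ := by
        have : (b : EReal) ≤ i := le_sInf (by rintro _ ⟨z, -, rfl⟩; exact hb z)
        intro h; rw [h] at this; exact (EReal.bot_lt_coe b).not_ge this
      obtain ⟨r, hr⟩ := ereal_real hitop hibot
      have hlt : i < i + (((1/2:ℝ)^n : ℝ) : EReal) := by
        rw [hr, ← EReal.coe_add]
        exact_mod_cast lt_add_of_pos_right r (by positivity)
      have hlt' : sInf (g '' S w) < i + (((1/2:ℝ)^n : ℝ) : EReal) := hi ▸ hlt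
      obtain ⟨y, hymem, hy⟩ := sInf_lt_iff.1 hlt'
      obtain ⟨u, hu, rfl⟩ := hymem
      refine ⟨u, fun _ => ⟨hu, fun z hz => ?_⟩⟩
      exact hy.trans_le (add_le_add_left (sInf_le (Set.mem_image_of_mem g hz)) _)
    · exact ⟨w, fun h => absurd h hw⟩
  choose next hnext using hex
  set v : ℕ → X := fun n => Nat.rec x0 (fun n ih => next n ih) n with hv
  have hv0 : v 0 = x0 := rfl
  have hvs : ∀ n, v (n+1) = next n (v n) := fun n => rfl
  have hkey : ∀ n, g (v n) ≤ g x0 := by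
    intro n
    induction n with
    | zero => exact le_refl _
    | succ n ih =>
      rw [hvs n]
      exact (hle _ _ (hnext n (v n) ih).1).trans ih
  have hmem : ∀ n, v (n+1) ∈ S (v n) ∧
      ∀ z ∈ S (v n), g (v (n+1)) < g z + (((1/2:ℝ)^n : ℝ) : EReal) := by
    intro n; rw [hvs n]; exact hnext n (v n) (hkey n)
  have hchain : ∀ n m, n ≤ m → v m ∈ S (v n) := by
    intro n m hnm
    induction m, hnm using Nat.le_induction with
    | base => exact hSrefl _
    | succ m hnm ih => exact htrans _ _ _ (hmem m).1 ih
  have hgreal : ∀ w, g w ≤ g x0 → ∃ r : ℝ, g w = (r : EReal) := by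
    intro w hw
    refine ereal_real (fun h => hx0 (top_le_iff.1 ?_)) (fun h => ?_)
    · rw [← h]; exact hw
    · exact (EReal.bot_lt_coe b).not_ge (h ▸ hb w)
  have hdist : ∀ n, ∀ u ∈ S (v (n+1)), lam * dist u (v (n+1)) < (1/2:ℝ)^n := by
    intro n u hu
    have hu' : u ∈ S (v n) := htrans _ _ _ hu (hmem n).1
    have h1 : g u + ((lam * dist u (v (n+1)) : ℝ) : EReal) ≤ g (v (n+1)) := hu
    have h2 : g (v (n+1)) < g u + (((1/2:ℝ)^n : ℝ) : EReal) := (hmem n).2 u hu'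
    obtain ⟨r, hr⟩ := hgreal u ((hle _ _ hu).trans (hkey (n+1)))
    rw [hr] at h1 h2
    rw [← EReal.coe_add] at h1 h2
    have h3 := EReal.coe_lt_coe_iff.1 (h1.trans_lt h2)
    linarith
  have hcauchy : CauchySeq v := by
    rw [Metric.cauchySeq_iff']
    intro ε hε
    obtain ⟨K, hK⟩ := exists_pow_lt_of_lt_one (mul_pos hlam hε) (by norm_num : (1/2:ℝ) < 1)
    refine ⟨K + 1, fun n hn => ?_⟩
    have h := hdist K (v n) (hchain _ _ hn)
    have h2 : lam * dist (v n) (v (K+1)) < lam * ε := h.trans hK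
    exact (mul_lt_mul_iff_right₀ hlam).1 h2
  obtain ⟨vl, hlim⟩ := cauchySeq_tendsto_of_complete hcauchy
  -- vl ∈ S (v n) for all n
  have hSlim : ∀ n, vl ∈ S (v n) := by
    intro n
    by_contra hcon
    simp only [hS, Set.mem_setOf_eq, not_le] at hcon
    obtain ⟨c, hc⟩ := hgreal (v n) (hkey n)
    set D := lam * dist vl (v n) with hD
    have h1 : ((c - D : ℝ) : EReal) < g vl := by
      rcases eq_or_ne (g vl) ⊤ with h | h
      · rw [h]; exact EReal.coe_lt_top _
      · obtain ⟨s, hs⟩ := ereal_real h (fun hbb => (EReal.bot_lt_coe b).not_ge (hbb ▸ hb vl))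
        rw [hs, ← EReal.coe_add, hc] at hcon
        rw [hs]
        exact_mod_cast by linarith [EReal.coe_lt_coe_iff.1 hcon]
    obtain ⟨t, ht1, ht2⟩ := EReal.lt_iff_exists_real_btwn.1 h1
    have htD : c < t + D := by
      have := EReal.coe_lt_coe_iff.1 ht1; linarith
    have hev1 : ∀ᶠ z in 𝓝 vl, (t : EReal) < g z := hlsc vl t ht2
    have hev2 : ∀ᶠ z in 𝓝 vl, c < t + lam * dist z (v n) := by
      have hcont : Continuous fun z => t + lam * dist z (v n) :=
        continuous_const.add (continuous_const.mul (continuous_id.dist continuous_const))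
      have := (hcont.tendsto vl).eventually_const_lt (show c < t + lam * dist vl (v n) from htD)
      exact this
    obtain ⟨m, ⟨hm1, hm2⟩, hm3⟩ := ((hlim.eventually (hev1.and hev2)).and
      (eventually_ge_atTop n)).exists
    have hmS : v m ∈ S (v n) := hchain n m hm3
    have : ((t + lam * dist (v m) (v n) : ℝ) : EReal) ≤ (c : EReal) := by
      calc ((t + lam * dist (v m) (v n) : ℝ) : EReal)
          = (t : EReal) + ((lam * dist (v m) (v n) : ℝ) : EReal) := EReal.coe_add _ _
        _ ≤ g (v m) + ((lam * dist (v m) (v n) : ℝ) : EReal) := add_le_add_left hm1.le _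
        _ ≤ g (v n) := hmS
        _ = (c : EReal) := hc
    have : t + lam * dist (v m) (v n) ≤ c := EReal.coe_le_coe_iff.1 this
    linarith [hm2]
  refine ⟨vl, hSlim 0, fun w => ?_⟩
  by_contra hcon
  push_neg at hcon
  have hwS : w ∈ S vl := le_of_lt hcon
  rcases eq_or_ne (dist w vl) 0 with hd | hd
  · have : w = vl := by rwa [dist_eq_zero] at hd
    rw [this, dist_self, mul_zero] at hcon
    simp at hcon
  · have hDpos : 0 < lam * dist w vl := mul_pos hlam (lt_of_le_of_ne dist_nonneg (Ne.symm hd))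
    obtain ⟨s, hs⟩ := hgreal vl (hle _ _ (hSlim 0) |>.trans (hkey 0))
    obtain ⟨r, hr⟩ := by
      refine hgreal w ?_
      exact (hle _ _ hwS).trans ((hle _ _ (hSlim 0)).trans (hkey 0))
    have hrs : r + lam * dist w vl < s := by
      rw [hs, hr, ← EReal.coe_add] at hcon
      exact_mod_cast hcon
    obtain ⟨K, hK⟩ := exists_pow_lt_of_lt_one hDpos (by norm_num : (1/2:ℝ) < 1)
    have hwn : w ∈ S (v K) := htrans _ _ _ hwS (hSlim K)
    have h1 : g (v (K+1)) < g w + (((1/2:ℝ)^K : ℝ) : EReal) := (hmem K).2 w hwn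
    have h2 : g vl ≤ g (v (K+1)) := hle _ _ (hSlim (K+1))
    have : (s : EReal) < ((r + (1/2:ℝ)^K : ℝ) : EReal) := by
      rw [← hs, EReal.coe_add, ← hr]
      exact h2.trans_lt h1
    have : s < r + (1/2:ℝ)^K := EReal.coe_lt_coe_iff.1 this
    linarith

/-- Sufficient condition for optimality: local minimality is equivalent to
local minimality relative to an identifiable set. -/
theorem localMin_iff_localMin_on_identifiable {X : Type*} [MetricSpace X] [CompleteSpace X]
    (f : X → EReal) (hlsc : LowerSemicontinuous f) (hbot : ∀ z, f z ≠ ⊥)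
    (xbar : X) (hfin : f xbar ≠ ⊤) (hslope : slopeM f xbar = 0)
    (M : Set X) (hM : Identifiable f M xbar) :
    (∀ᶠ z in 𝓝 xbar, f xbar ≤ f z) ↔ (∀ᶠ z in 𝓝[M] xbar, f xbar ≤ f z) := by
  classical
  constructor
  · exact fun h => h.filter_mono nhdsWithin_le_nhds
  intro h
  obtain ⟨hMclosed, hxM, hpos⟩ := hM
  obtain ⟨r0, hr0⟩ := ereal_real hfin (hbot xbar)
  -- extract a positive lower bound `a = ofReal lam` on slopes along the filter
  obtain ⟨a, ha0, halt⟩ := exists_between hpos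
  have hatop : a ≠ ⊤ := halt.ne_top
  set lam := a.toReal with hlamdef
  have hlam : 0 < lam := ENNReal.toReal_pos ha0.ne' hatop
  have hofa : ENNReal.ofReal lam = a := ENNReal.ofReal_toReal hatop
  rw [identModulus] at halt
  have hev : ∀ᶠ x in (𝓝[Mᶜ] xbar ⊓ Filter.comap f (𝓝 (f xbar))), a < slopeM f x :=
    Filter.eventually_lt_of_lt_liminf halt
  obtain ⟨t1, ht1, t2, ht2, hinter⟩ := Filter.mem_inf_iff.1 hev
  obtain ⟨V, hV, hVsub⟩ := Filter.mem_comap.1 ht2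
  obtain ⟨U, hUopen, hxU, hUsub⟩ := mem_nhdsWithin.1 ht1
  have hV' : (fun r : ℝ => (r : EReal)) ⁻¹' V ∈ 𝓝 r0 := by
    rw [hr0, EReal.nhds_coe] at hV
    exact Filter.mem_map.1 hV
  obtain ⟨η, hη, hball⟩ := Metric.mem_nhds_iff.1 hV'
  -- local slope inequality at xbar with constant lam/2
  have hsl : ∀ᶠ z in 𝓝 xbar, f xbar ≤ f z + ((lam/2 * dist z xbar : ℝ) : EReal) := by
    have h0 : sInf {δ : ℝ≥0∞ | ∃ c : ℝ, 0 < c ∧ δ = ENNReal.ofReal c ∧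
        ∀ᶠ z in 𝓝 xbar, f xbar ≤ f z + ((c * dist z xbar : ℝ) : EReal)} = 0 := by
      simpa [slopeM, if_neg hfin] using hslope
    have hlt : sInf {δ : ℝ≥0∞ | ∃ c : ℝ, 0 < c ∧ δ = ENNReal.ofReal c ∧
        ∀ᶠ z in 𝓝 xbar, f xbar ≤ f z + ((c * dist z xbar : ℝ) : EReal)}
        < ENNReal.ofReal (lam/2) := by
      rw [h0]; exact ENNReal.ofReal_pos.2 (by positivity)
    obtain ⟨δ, hδmem, hδlt⟩ := sInf_lt_iff.1 hlt
    obtain ⟨c, hc0, rfl, hcev⟩ := hδmem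
    have hc : c < lam/2 := (ENNReal.ofReal_lt_ofReal_iff (by positivity)).1 hδlt
    filter_upwards [hcev] with z hz
    refine hz.trans (add_le_add_right ?_ _)
    exact_mod_cast mul_le_mul_of_nonneg_right hc.le dist_nonneg
  obtain ⟨r1, hr1, hr1ball⟩ := Metric.eventually_nhds_iff_ball.1 hsl
  obtain ⟨r2, hr2, hr2ball⟩ := Metric.mem_nhdsWithin_iff.1 h
  obtain ⟨r3, hr3, hr3ball⟩ := Metric.isOpen_iff.1 hUopen xbar hxU
  -- choose radius R
  set R := min (min (r1/2) (r2/2)) (min (r3/2) (η/(2*lam))) with hRdef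
  have hR0 : 0 < R := by
    apply lt_min (lt_min (by linarith) (by linarith)) (lt_min (by linarith) (by positivity))
  have hRr1 : R < r1 := ((min_le_left _ _).trans (min_le_left _ _)).trans_lt (by linarith)
  have hRr2 : R < r2 := ((min_le_left _ _).trans (min_le_right _ _)).trans_lt (by linarith)
  have hRr3 : R < r3 := ((min_le_right _ _).trans (min_le_left _ _)).trans_lt (by linarith)
  have hRη : lam * R < η := by
    have h1 : R ≤ η/(2*lam) := (min_le_right _ _).trans (min_le_right _ _)
    calc lam * R ≤ lam * (η/(2*lam)) := mul_le_mul_of_nonneg_left h1 hlam.le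
    _ = η/2 := by field_simp
    _ < η := by linarith
  -- penalized function
  set g : X → EReal := fun w => if w ∈ Metric.closedBall xbar R then f w else ⊤ with hgdef
  have hglsc : LowerSemicontinuous g := by
    intro x t ht
    by_cases hx : x ∈ Metric.closedBall xbar R
    · have hgx : g x = f x := if_pos hx
      rw [hgx] at ht
      have htT : t < ⊤ := lt_of_lt_of_le ht le_top
      filter_upwards [hlsc x t ht] with z hz
      by_cases hzB : z ∈ Metric.closedBall xbar R
      · have hgz2 : g z = f z := if_pos hzB
        rw [hgz2]; exact hz
      · have hgz2 : g z = ⊤ := if_neg hzB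
        rw [hgz2]; exact htT
    · have hgx : g x = ⊤ := if_neg hx
      rw [hgx] at ht
      have hopen : IsOpen (Metric.closedBall xbar R)ᶜ := Metric.isClosed_closedBall.isOpen_compl
      filter_upwards [hopen.mem_nhds hx] with z hz
      have : g z = ⊤ := if_neg hz
      rw [this]
      exact lt_of_lt_of_le ht le_top
  have hgb : ∀ z, ((r0 - lam/2 * R : ℝ) : EReal) ≤ g z := by
    intro z
    by_cases hz : z ∈ Metric.closedBall xbar R
    · have hgz : g z = f z := if_pos hz
      rw [hgz]
      have hd : dist z xbar ≤ R := Metric.mem_closedBall.1 hz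
      have hslz : f xbar ≤ f z + ((lam/2 * dist z xbar : ℝ) : EReal) :=
        hr1ball z (Metric.mem_ball.2 (hd.trans_lt hRr1))
      rcases eq_or_ne (f z) ⊤ with hT | hT
      · rw [hT]; exact le_top
      · obtain ⟨u, hu⟩ := ereal_real hT (hbot z)
        rw [hu, hr0, ← EReal.coe_add] at hslz
        rw [hu]
        have : r0 ≤ u + lam/2 * dist z xbar := EReal.coe_le_coe_iff.1 hslz
        apply EReal.coe_le_coe_iff.2
        nlinarith
    · have hgz2 : g z = ⊤ := if_neg hz
      rw [hgz2]; exact le_top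
  -- conclusion
  rw [Metric.eventually_nhds_iff_ball]
  refine ⟨R/3, by positivity, fun z hz => ?_⟩
  by_contra hfz
  push_neg at hfz
  have hzball : z ∈ Metric.closedBall xbar R :=
    Metric.mem_closedBall.2 ((Metric.mem_ball.1 hz).le.trans (by linarith))
  have hgz : g z = f z := if_pos hzball
  have hfztop : f z ≠ ⊤ := (hfz.trans_le le_top).ne
  have hgztop : g z ≠ ⊤ := by rw [hgz]; exact hfztop
  obtain ⟨v, hv1, hv2⟩ := ekelandEReal g hglsc (r0 - lam/2 * R) hgb lam hlam z hgztop
  have hvz : g v ≤ g z :=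
    (ereal_le_add_nonneg (g v) _ (mul_nonneg hlam.le dist_nonneg)).trans hv1
  have hgvtop : g v ≠ ⊤ := fun hT => hgztop (top_le_iff.1 (hT ▸ hvz))
  have hvball : v ∈ Metric.closedBall xbar R := by
    by_contra hc; exact hgvtop (if_neg hc)
  have hgv : g v = f v := if_pos hvball
  have hfvtop : f v ≠ ⊤ := hgv ▸ hgvtop
  obtain ⟨t, htv⟩ := ereal_real hfvtop (hbot v)
  obtain ⟨u, huz⟩ := ereal_real hfztop (hbot z)
  -- real inequalities
  have hA : t + lam * dist v z ≤ u := by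
    rw [hgv, hgz, htv, huz, ← EReal.coe_add] at hv1
    exact EReal.coe_le_coe_iff.1 hv1
  have hB : u < r0 := by
    rw [huz, hr0] at hfz
    exact_mod_cast hfz
  have hC : r0 ≤ t + lam/2 * dist v xbar := by
    have := hr1ball v (Metric.mem_ball.2 ((Metric.mem_closedBall.1 hvball).trans_lt hRr1))
    rw [htv, hr0, ← EReal.coe_add] at this
    exact EReal.coe_le_coe_iff.1 this
  have htri : dist v xbar ≤ dist v z + dist z xbar := dist_triangle v z xbar
  have hdzx : dist z xbar < R/3 := Metric.mem_ball.1 hz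
  have hdvz : dist v z < R/3 := by nlinarith [dist_nonneg (x := v) (y := z)]
  have hdvx : dist v xbar < 2*R/3 := by linarith [htri]
  have hdvxR : dist v xbar < R := by linarith
  -- slope bound at v
  have hslopev : slopeM f v ≤ a := by
    rw [show slopeM f v = sInf {δ : ℝ≥0∞ | ∃ c : ℝ, 0 < c ∧ δ = ENNReal.ofReal c ∧
        ∀ᶠ w in 𝓝 v, f v ≤ f w + ((c * dist w v : ℝ) : EReal)} from if_neg hfvtop]
    rw [← hofa]
    apply sInf_le
    refine ⟨lam, hlam, rfl, ?_⟩
    have hnb : Metric.ball xbar R ∈ 𝓝 v := Metric.isOpen_ball.mem_nhds (Metric.mem_ball.2 hdvxR)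
    filter_upwards [hnb] with w hw
    have hwball : w ∈ Metric.closedBall xbar R := Metric.ball_subset_closedBall hw
    have hgw : g w = f w := if_pos hwball
    have := hv2 w
    rwa [hgv, hgw] at this
  -- v not in M
  have hvM : v ∉ M := by
    intro hvMem
    have h1 : f xbar ≤ f v := hr2ball ⟨Metric.mem_ball.2 (hdvxR.trans hRr2), hvMem⟩
    have h2 : f v ≤ f z := by rw [← hgv, ← hgz]; exact hvz
    exact absurd ((h1.trans h2).trans_lt hfz) (lt_irrefl _)
  -- f v ∈ V
  have htu : t ≤ u := by nlinarith [dist_nonneg (x := v) (y := z)]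
  have hfvV : f v ∈ V := by
    have htball : t ∈ Metric.ball r0 η := by
      rw [Metric.mem_ball, Real.dist_eq, abs_lt]
      constructor
      · nlinarith
      · nlinarith
    have := hball htball
    rwa [htv]
  -- contradiction
  have hvt : v ∈ t1 ∩ t2 := ⟨hUsub ⟨hr3ball (Metric.mem_ball.2 (hdvxR.trans hRr3)), hvM⟩,
    hVsub hfvV⟩
  have : a < slopeM f v := by
    have : v ∈ {x | a < slopeM f x} := hinter ▸ hvt
    exact this
  exact absurd hslopev (not_le.2 this)
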